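/- minLc ≤ add(SN): for every dominating family D ⊆ ω^ω and every h ∈ ω^ω diverging to infinity, SN ⪯_T ∏_{b∈D} Lc(b,h), and hence the additivity of the strong measure zero ideal is at least minLc. -/

import Mathlib

open Cardinal Set Filter

/-- A relational system `⟨X, Y, R⟩`. -/
structure RelSys : Type 1 where
  X : Type
  Y : Type
  R : X → Y → Prop

/-- Tukey connection: `A ⪯_T B`. -/
def Tukey (A B : RelSys) : Prop :=
  ∃ (φ : A.X → B.X) (ψ : B.Y → A.Y), ∀ x y, B.R (φ x) y → A.R x (ψ y)

/-- The bounding number `𝔟(A)` of a relational system. -/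
noncomputable def bnum (A : RelSys) : Cardinal :=
  sInf {c | ∃ F : Set A.X, c = #↥F ∧ ∀ y, ∃ x ∈ F, ¬ A.R x y}

/-- The additivity number of a family of sets. -/
noncomputable def addIdeal {α : Type*} (I : Set (Set α)) : Cardinal :=
  sInf {c | ∃ F : Set (Set α), F ⊆ I ∧ c = #↥F ∧ ⋃₀ F ∉ I}

/-- The Cantor space `2^ω`. -/
abbrev Cantor : Type := ℕ → Bool

/-- The basic clopen cylinder determined by a finite binary sequence. -/
def cyl (s : List Bool) : Set Cantor := {x | ∀ i, ∀ h : i < s.length, x i = s.get ⟨i, h⟩}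

/-- The σ-ideal `SN` of strong measure zero subsets of `2^ω`. -/
def SMZ : Set (Set Cantor) :=
  {X | ∀ f : ℕ → ℕ, ∃ σ : ℕ → List Bool,
    (∀ i, f i ≤ (σ i).length) ∧ X ⊆ ⋃ i, cyl (σ i)}

/-- `∏ b` for `b ∈ ω^ω`. -/
abbrev Pb (b : ℕ → ℕ) : Type := {f : ℕ → ℕ // ∀ n, f n < b n}

/-- The set `S(b,h)` of slaloms: `φ n ⊆ b n` with `|φ n| ≤ h n`. -/
def Slalom (b h : ℕ → ℕ) : Type :=
  {φ : ℕ → Finset ℕ // ∀ n, (φ n).card ≤ h n ∧ ∀ k ∈ φ n, k < b n}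

/-- The localization relational system `Lc(b,h) = ⟨∏b, S(b,h), ∈*⟩`. -/
def LcSys (b h : ℕ → ℕ) : RelSys :=
  ⟨Pb b, Slalom b h, fun x φ => ∀ᶠ n in atTop, x.1 n ∈ φ.1 n⟩

/-- `minLc`: the minimum over `b ∈ ω^ω` of `𝔟(Lc(b, id))`. -/
noncomputable def minLc : Cardinal :=
  ⨅ b : {b : ℕ → ℕ // ∀ n, 0 < b n}, bnum (LcSys b.1 (fun n => n))

namespace Stmt16Aux

/-! ### Coding of binary strings by natural numbers -/

def dec : ℕ → ℕ → List Bool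
  | 0, _ => []
  | (L+1), k => (k % 2 == 1) :: dec L (k / 2)

def enc : List Bool → ℕ
  | [] => 0
  | a :: t => (cond a 1 0) + 2 * enc t

lemma dec_length : ∀ L k, (dec L k).length = L
  | 0, _ => rfl
  | (L+1), k => by simp [dec, dec_length L]

lemma enc_lt : ∀ s : List Bool, enc s < 2 ^ s.length
  | [] => by simp [enc]
  | a :: t => by
    have := enc_lt t
    cases a <;> (simp [enc, pow_succ]; omega)

lemma dec_enc : ∀ s : List Bool, dec s.length (enc s) = s
  | [] => rfl
  | a :: t => by
    have h2 : (cond a 1 0 + 2 * enc t) / 2 = enc t := by cases a <;> simp <;> omega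
    have h1 : ((cond a 1 0 + 2 * enc t) % 2 == 1) = a := by
      cases a <;> simp [Nat.add_mul_mod_self_left]
    show (enc (a :: t) % 2 == 1) :: dec t.length (enc (a :: t) / 2) = a :: t
    rw [show enc (a :: t) = cond a 1 0 + 2 * enc t from rfl, h1, h2, dec_enc t]

lemma mem_cyl_take {x : Cantor} {s : List Bool} (h : x ∈ cyl s) (L : ℕ) :
    x ∈ cyl (s.take L) := by
  intro i hi
  have hi' : i < s.length := lt_of_lt_of_le hi (by simp [List.length_take])
  have := h i hi'
  simpa [List.get_eq_getElem, List.getElem_take] using this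

/-! ### Basic facts about `SMZ` -/

lemma smz_mono {A B : Set Cantor} (hAB : A ⊆ B) (hB : B ∈ SMZ) : A ∈ SMZ := by
  intro f
  obtain ⟨σ, h1, h2⟩ := hB f
  exact ⟨σ, h1, hAB.trans h2⟩

lemma singleton_smz (x : Cantor) : ({x} : Set Cantor) ∈ SMZ := by
  intro f
  refine ⟨fun i => List.ofFn (fun j : Fin (f i) => x j), by simp, ?_⟩
  rintro y rfl
  refine mem_iUnion.mpr ⟨0, ?_⟩
  intro i hi
  simp [List.get_eq_getElem, List.getElem_ofFn]

lemma univ_not_smz : (Set.univ : Set Cantor) ∉ SMZ := by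
  intro h
  obtain ⟨σ, hlen, hcov⟩ := h (fun i => i + 1)
  have hlt : ∀ i, i < (σ i).length := fun i => lt_of_lt_of_le (Nat.lt_succ_self i) (hlen i)
  set x : Cantor := fun i => !(σ i).get ⟨i, hlt i⟩ with hx
  obtain ⟨_, ⟨i, rfl⟩, hmem⟩ := hcov (mem_univ x)
  have := hmem i (hlt i)
  simp [hx] at this

/-- Infinitely-often covering: from `X ∈ SMZ` we get, for every `f`, a cover whose
cylinders each element of `X` meets infinitely often. -/
lemma smz_io {X : Set Cantor} (hX : X ∈ SMZ) (f : ℕ → ℕ) :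
    ∃ σ : ℕ → List Bool, (∀ i, f i ≤ (σ i).length) ∧
      ∀ x ∈ X, ∃ᶠ n in atTop, x ∈ cyl (σ n) := by
  choose σ' h1 h2 using fun k => hX (fun m => f (Nat.pair k m))
  refine ⟨fun i => σ' i.unpair.1 i.unpair.2, ?_, ?_⟩
  · intro i
    have := h1 i.unpair.1 i.unpair.2
    simpa [Nat.pair_unpair] using this
  · intro x hx
    have hm : ∀ k, ∃ m, x ∈ cyl (σ' k m) := by
      intro k
      obtain ⟨_, ⟨m, rfl⟩, hmm⟩ := h2 k hx
      exact ⟨m, hmm⟩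
    choose m hm using hm
    rw [frequently_atTop]
    intro N
    refine ⟨Nat.pair N (m N), Nat.left_le_pair _ _, ?_⟩
    simpa [Nat.unpair_pair] using hm N

/-! ### The set used as value of the Tukey map `ψ`, and its strong measure zero proof -/

/-- The decoded-slalom set. -/
def psiSet (D : Set (ℕ → ℕ)) (h : ℕ → ℕ) (y : ∀ b : D, Slalom b.1 h) : Set Cantor :=
  {x | ∀ b : D, ∃ᶠ n in atTop, ∃ k ∈ (y b).1 n, x ∈ cyl (dec (Nat.log 2 (b.1 n)) k)}

lemma psiSet_smz (D : Set (ℕ → ℕ)) (h : ℕ → ℕ)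
    (hdom : ∀ g : ℕ → ℕ, ∃ f ∈ D, ∀ᶠ n in atTop, g n ≤ f n)
    (y : ∀ b : D, Slalom b.1 h) : psiSet D h y ∈ SMZ := by
  classical
  intro g
  set g' : ℕ → ℕ := fun i => (Finset.range (i + 1)).sup g with hg'
  have hg'le : ∀ {j i : ℕ}, j ≤ i → g j ≤ g' i := fun {j i} hj =>
    Finset.le_sup (Finset.mem_range.mpr (Nat.lt_succ_of_le hj))
  set Q : ℕ → ℕ := fun n => Nat.pair n (h n) with hQ
  obtain ⟨b, hbD, hbev⟩ := hdom fun n => 2 ^ g' (Q n)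
  obtain ⟨N0, hN0⟩ := eventually_atTop.mp hbev
  have hkey : ∀ n, N0 ≤ n → g' (Q n) ≤ Nat.log 2 (b n) := by
    intro n hn
    have hb0 : b n ≠ 0 := by
      have h1 : 0 < 2 ^ g' (Q n) := Nat.pow_pos (by norm_num)
      have h2 := hN0 n hn
      omega
    exact (Nat.le_log_iff_pow_le one_lt_two hb0).mpr (hN0 n hn)
  set bD : D := ⟨b, hbD⟩ with hbDdef
  refine ⟨fun i =>
    if hc : N0 ≤ i.unpair.1 ∧ i.unpair.2 < ((y bD).1 i.unpair.1).toList.length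
    then dec (Nat.log 2 (b i.unpair.1)) (((y bD).1 i.unpair.1).toList.get ⟨i.unpair.2, hc.2⟩)
    else List.replicate (g i) true, ?_, ?_⟩
  · intro i
    beta_reduce
    by_cases hc : N0 ≤ i.unpair.1 ∧ i.unpair.2 < ((y bD).1 i.unpair.1).toList.length
    · rw [dif_pos hc, dec_length]
      have hjh : i.unpair.2 ≤ h i.unpair.1 := by
        have hcard := ((y bD).2 i.unpair.1).1
        have hl : ((y bD).1 i.unpair.1).toList.length = ((y bD).1 i.unpair.1).card :=
          Finset.length_toList _
        omega
      have hiQ : i ≤ Q i.unpair.1 := by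
        have hpu : Nat.pair i.unpair.1 i.unpair.2 = i := Nat.pair_unpair i
        have : Nat.pair i.unpair.1 i.unpair.2 ≤ Nat.pair i.unpair.1 (h i.unpair.1) := by
          rcases eq_or_lt_of_le hjh with heq | hlt
          · rw [heq]
          · exact (Nat.pair_lt_pair_right _ hlt).le
        simpa [hpu, hQ] using this
      exact le_trans (hg'le hiQ) (hkey _ hc.1)
    · rw [dif_neg hc, List.length_replicate]
  · intro x hx
    obtain ⟨n, hn, k, hk, hcyl⟩ := frequently_atTop.mp (hx bD) N0
    obtain ⟨j, hj⟩ := List.mem_iff_get.mp (Finset.mem_toList.mpr hk)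
    refine mem_iUnion.mpr ⟨Nat.pair n j.1, ?_⟩
    have hun1 : (Nat.pair n j.1).unpair.1 = n := by rw [Nat.unpair_pair]
    have hun2 : (Nat.pair n j.1).unpair.2 = j.1 := by rw [Nat.unpair_pair]
    have hc : N0 ≤ (Nat.pair n j.1).unpair.1 ∧
        (Nat.pair n j.1).unpair.2 < ((y bD).1 (Nat.pair n j.1).unpair.1).toList.length := by
      rw [hun1, hun2]; exact ⟨hn, j.2⟩
    show x ∈ cyl _
    beta_reduce
    rw [Nat.unpair_pair]
    show x ∈ cyl (if hc : N0 ≤ n ∧ ↑j < ((y bD).1 n).toList.length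
      then dec (Nat.log 2 (b n)) (((y bD).1 n).toList.get ⟨↑j, hc.2⟩)
      else List.replicate (g (Nat.pair n ↑j)) true)
    rw [dif_pos ⟨hn, j.2⟩]
    have hg : ((y bD).1 n).toList.get ⟨j.1, j.2⟩ = k := hj
    rw [hg]
    exact hcyl

/-! ### The Tukey connection -/

lemma tukey_main (D : Set (ℕ → ℕ)) (hD : ∀ b ∈ D, ∀ n, 0 < b n)
    (hdom : ∀ g : ℕ → ℕ, ∃ f ∈ D, ∀ᶠ n in atTop, g n ≤ f n) (h : ℕ → ℕ) :
    Tukey ⟨↥SMZ, ↥SMZ, fun A B => A.1 ⊆ B.1⟩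
      ⟨∀ b : D, Pb b.1, ∀ b : D, Slalom b.1 h,
        fun x φ => ∀ b : D, ∀ᶠ n in atTop, (x b).1 n ∈ ((φ b).1 n)⟩ := by
  have hsel : ∀ (X : ↥SMZ) (b : D), ∃ σ : ℕ → List Bool,
      (∀ i, Nat.log 2 (b.1 i) ≤ (σ i).length) ∧ ∀ x ∈ X.1, ∃ᶠ n in atTop, x ∈ cyl (σ n) :=
    fun X b => smz_io X.2 _
  choose σsel hlen hio using hsel
  have hlen' : ∀ X b n, ((σsel X b n).take (Nat.log 2 (b.1 n))).length = Nat.log 2 (b.1 n) := by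
    intro X b n; rw [List.length_take]; exact min_eq_left (hlen X b n)
  refine ⟨fun X b => ⟨fun n => enc ((σsel X b n).take (Nat.log 2 (b.1 n))), ?_⟩,
    fun y => ⟨psiSet D h y, psiSet_smz D h hdom y⟩, ?_⟩
  · intro n
    have h1 := enc_lt ((σsel X b n).take (Nat.log 2 (b.1 n)))
    rw [hlen' X b n] at h1
    exact lt_of_lt_of_le h1 (Nat.pow_log_le_self 2 (hD b.1 b.2 n).ne')
  · rintro X y hR x hx b
    have h1 := hio X b x hx
    have h2 := hR b
    refine (h1.and_eventually h2).mono ?_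
    rintro n ⟨hc, hm⟩
    refine ⟨_, hm, ?_⟩
    obtain ⟨t, ht2⟩ : ∃ t, (σsel X b n).take (Nat.log 2 (b.1 n)) = t := ⟨_, rfl⟩
    have ht : t.length = Nat.log 2 (b.1 n) := by rw [← ht2]; exact hlen' X b n
    have hde : dec (Nat.log 2 (b.1 n)) (enc ((σsel X b n).take (Nat.log 2 (b.1 n)))) = t := by
      rw [ht2, ← ht]; exact dec_enc t
    rw [hde, ← ht2]
    exact mem_cyl_take hc _

end Stmt16Aux

/-- For every dominating family `D ⊆ ω^ω` (of positive functions) and every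
`h ∈ ω^ω` diverging to infinity, `SN ⪯_T ∏_{b∈D} Lc(b,h)`; and hence
`minLc ≤ add(SN)`. -/
theorem stmt16 :
    (∀ D : Set (ℕ → ℕ), (∀ b ∈ D, ∀ n, 0 < b n) →
      (∀ g : ℕ → ℕ, ∃ f ∈ D, ∀ᶠ n in atTop, g n ≤ f n) →
      ∀ h : ℕ → ℕ, Tendsto h atTop atTop →
        Tukey ⟨↥SMZ, ↥SMZ, fun A B => A.1 ⊆ B.1⟩
          ⟨∀ b : D, Pb b.1, ∀ b : D, Slalom b.1 h,
            fun x φ => ∀ b : D, ∀ᶠ n in atTop, (x b).1 n ∈ ((φ b).1 n)⟩) ∧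
    minLc ≤ addIdeal SMZ := by
  open Stmt16Aux in
  refine ⟨fun D hD hdom h _ => tukey_main D hD hdom h, ?_⟩
  classical
  set Dall : Set (ℕ → ℕ) := {b | ∀ n, 0 < b n} with hDall
  have hdom : ∀ g : ℕ → ℕ, ∃ f ∈ Dall, ∀ᶠ n in atTop, g n ≤ f n := fun g =>
    ⟨fun n => g n + 1, fun n => Nat.succ_pos _, Eventually.of_forall fun n => Nat.le_succ _⟩
  obtain ⟨φT, ψT, hT⟩ := Stmt16Aux.tukey_main Dall (fun b hb => hb) hdom (fun n => n)
  have hsingle : Set.range (fun x : Cantor => ({x} : Set Cantor)) ⊆ SMZ := by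
    rintro _ ⟨x, rfl⟩; exact Stmt16Aux.singleton_smz x
  refine le_csInf ⟨#↥(Set.range (fun x : Cantor => ({x} : Set Cantor))),
    Set.range (fun x : Cantor => ({x} : Set Cantor)), hsingle, rfl, ?_⟩ ?_
  · rw [Set.sUnion_range, Set.iUnion_of_singleton]
    exact Stmt16Aux.univ_not_smz
  · rintro c ⟨F, hF, rfl, hU⟩
    have hexists : ∃ b : ↥Dall, ∀ y : Slalom b.1 (fun n => n), ∃ X : ↥F,
        ¬ ∀ᶠ n in atTop, (φT ⟨X.1, hF X.2⟩ b).1 n ∈ y.1 n := by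
      by_contra hcon
      push_neg at hcon
      choose yf hy using hcon
      have hsub : ⋃₀ F ⊆ (ψT yf).1 := by
        apply sUnion_subset
        intro X hX
        exact hT ⟨X, hF hX⟩ yf fun b => hy b ⟨X, hX⟩
      exact hU (Stmt16Aux.smz_mono hsub (ψT yf).2)
    obtain ⟨b, hb⟩ := hexists
    set u : ↥F → Pb b.1 := fun X => φT ⟨X.1, hF X.2⟩ b with hu
    have h1 : minLc ≤ bnum (LcSys b.1 (fun n => n)) :=
      ciInf_le (OrderBot.bddBelow _) (⟨b.1, b.2⟩ : {b : ℕ → ℕ // ∀ n, 0 < b n})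
    have h2 : bnum (LcSys b.1 (fun n => n)) ≤ #↥(Set.range u) := by
      refine csInf_le (OrderBot.bddBelow _) ⟨Set.range u, rfl, ?_⟩
      intro y
      obtain ⟨X, hX⟩ := hb y
      exact ⟨u X, ⟨X, rfl⟩, hX⟩
    exact h1.trans (h2.trans Cardinal.mk_range_le)
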